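/- Let (M_n) be a weight sequence with n² M_n/M_{n+1} → ∞ as n → ∞. Then the entire function g(z) = ∑_{n≥0} z^n/M_n has order ρ > 1/2, or order ρ = 1/2 with infinite type. -/

import Mathlib

open Filter

/-- The order of the entire function `g(z) = ∑ zⁿ/Mₙ`, via the standard coefficient
formula `ρ = limsup (n log n)/(-log aₙ)` with `aₙ = 1/Mₙ`. -/
noncomputable def entireOrder (M : ℕ → ℝ) : ℝ :=
  Filter.limsup (fun n : ℕ => ((n : ℝ) * Real.log n) / Real.log (M n)) Filter.atTop

section Aux

variable {M : ℕ → ℝ}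

/-- Upper bound by iterating an eventual recurrence `M (k+1) ≤ (k/C)² M k`. -/
lemma aux_upper (hpos : ∀ n, 0 < M n) {C : ℝ} (hC : 0 < C) {N : ℕ} (hN : 1 ≤ N)
    (h : ∀ k, N ≤ k → M (k + 1) ≤ ((k : ℝ) / C) ^ 2 * M k) :
    ∃ A > 0, ∀ n, N ≤ n → M n ≤ A * ((n : ℝ) / C) ^ (2 * n) := by
  have hN0 : (0 : ℝ) < (N : ℝ) := by exact_mod_cast hN
  have hNC : (0 : ℝ) < ((N : ℝ) / C) ^ (2 * N) := by positivity
  refine ⟨M N / ((N : ℝ) / C) ^ (2 * N), by have := hpos N; positivity, ?_⟩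
  set A := M N / ((N : ℝ) / C) ^ (2 * N) with hAdef
  have hA0 : 0 < A := by have := hpos N; positivity
  intro n hn
  induction n, hn using Nat.le_induction with
  | base => rw [hAdef, div_mul_cancel₀ _ hNC.ne']
  | succ n hn ih =>
    have hn0 : (0 : ℝ) ≤ (n : ℝ) / C := by positivity
    calc M (n + 1) ≤ ((n : ℝ) / C) ^ 2 * M n := h n hn
      _ ≤ ((n : ℝ) / C) ^ 2 * (A * ((n : ℝ) / C) ^ (2 * n)) :=
          mul_le_mul_of_nonneg_left ih (by positivity)
      _ = A * ((n : ℝ) / C) ^ (2 * n + 2) := by rw [pow_add]; ring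
      _ ≤ A * (((n : ℕ) + 1 : ℝ) / C) ^ (2 * n + 2) := by
          refine mul_le_mul_of_nonneg_left ?_ hA0.le
          have hstep : (n : ℝ) / C ≤ ((n : ℕ) + 1 : ℝ) / C := by gcongr; linarith
          exact pow_le_pow_left₀ hn0 hstep _
      _ = A * (((n + 1 : ℕ) : ℝ) / C) ^ (2 * (n + 1)) := by push_cast; ring

/-- `M 1 ^ m ≤ M m`. -/
lemma aux_low1 (hpos : ∀ n, 0 < M n) (hM0 : M 0 = 1)
    (hbin : ∀ n m : ℕ, (((n + m).choose n : ℕ) : ℝ) * M n * M m ≤ M (n + m)) :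
    ∀ m, M 1 ^ m ≤ M m := by
  intro m
  induction m with
  | zero => simp [hM0]
  | succ m ih =>
    have h1 : (0 : ℝ) < M 1 := hpos 1
    have hb := hbin m 1
    rw [Nat.choose_succ_self_right] at hb
    have hcast : (1 : ℝ) ≤ (((m + 1 : ℕ) : ℝ)) := by exact_mod_cast Nat.le_add_left 1 m
    calc M 1 ^ (m + 1) = M 1 ^ m * M 1 := pow_succ _ _
      _ ≤ M m * M 1 := mul_le_mul_of_nonneg_right ih h1.le
      _ ≤ ((m + 1 : ℕ) : ℝ) * M m * M 1 := by
          have h := mul_le_mul_of_nonneg_right hcast (mul_nonneg (hpos m).le h1.le)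
          nlinarith [h]
      _ ≤ M (m + 1) := hb

/-- `M m * (m · M 1)ʲ ≤ M (m + j)`. -/
lemma aux_low2 (hpos : ∀ n, 0 < M n)
    (hbin : ∀ n m : ℕ, (((n + m).choose n : ℕ) : ℝ) * M n * M m ≤ M (n + m)) :
    ∀ m j, M m * ((m : ℝ) * M 1) ^ j ≤ M (m + j) := by
  intro m j
  induction j with
  | zero => simp
  | succ j ih =>
    have h1 : (0 : ℝ) < M 1 := hpos 1
    have hb := hbin (m + j) 1
    rw [Nat.choose_succ_self_right] at hb
    have hcast : (m : ℝ) ≤ ((m + j + 1 : ℕ) : ℝ) := by exact_mod_cast Nat.le_succ_of_le (Nat.le_add_right m j)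
    have hnn : (0 : ℝ) ≤ (m : ℝ) * M 1 := by positivity
    calc M m * ((m : ℝ) * M 1) ^ (j + 1)
        = ((m : ℝ) * M 1) * (M m * ((m : ℝ) * M 1) ^ j) := by rw [pow_succ]; ring
      _ ≤ ((m : ℝ) * M 1) * M (m + j) := mul_le_mul_of_nonneg_left ih hnn
      _ ≤ (((m + j + 1 : ℕ) : ℝ) * M 1) * M (m + j) := by
          have h := mul_le_mul_of_nonneg_right hcast (mul_nonneg h1.le (hpos (m + j)).le)
          nlinarith [h]
      _ = ((m + j + 1 : ℕ) : ℝ) * M (m + j) * M 1 := by ring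
      _ ≤ M (m + j + 1) := hb
      _ = M (m + (j + 1)) := by ring_nf

end Aux

theorem order_gt_half_or_infinite_type
    (M : ℕ → ℝ) (hpos : ∀ n, 0 < M n) (hM0 : M 0 = 1)
    (hbin : ∀ n m : ℕ, (((n + m).choose n : ℕ) : ℝ) * M n * M m ≤ M (n + m))
    (hgrow : Tendsto (fun n : ℕ => (n : ℝ) ^ 2 * M n / M (n + 1)) atTop atTop) :
    1 / 2 < entireOrder M ∨
    (entireOrder M = 1 / 2 ∧
      ∀ T : ℝ, ∃ᶠ n : ℕ in atTop, T ≤ (n : ℝ) * (1 / M n) ^ (1 / (2 * (n : ℝ)))) := by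
  have hM1 : (0 : ℝ) < M 1 := hpos 1
  -- Step A : eventual lower bound on log M n
  have hlog_low : ∀ᶠ n : ℕ in atTop, (n : ℝ) / 4 * Real.log n ≤ Real.log (M n) := by
    have hK : ∀ᶠ n : ℕ in atTop,
        2 * Real.log 3 - 4 * Real.log (M 1) ≤ Real.log (n : ℝ) :=
      (Real.tendsto_log_atTop.comp tendsto_natCast_atTop_atTop).eventually_ge_atTop _
    filter_upwards [hK, eventually_ge_atTop 3] with n hKn hn3
    set m := n / 2 with hmdef
    set j := n - n / 2 with hjdef
    have hmj : m + j = n := by omega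
    have hm1 : 1 ≤ m := by omega
    have hmpos : (0 : ℝ) < (m : ℝ) := by exact_mod_cast hm1
    have hnpos : (0 : ℝ) < (n : ℝ) := by positivity
    have hjm : (n : ℝ) / 2 ≤ (j : ℝ) := by
      have h1 : ((n / 2 : ℕ) : ℝ) ≤ (n : ℝ) / 2 := Nat.cast_div_le
      have h2 : (j : ℝ) = (n : ℝ) - ((n / 2 : ℕ) : ℝ) := by
        rw [hjdef]; push_cast [Nat.div_le_self] ; ring
      linarith
    have hm3 : (n : ℝ) / 3 ≤ (m : ℝ) := by
      have h1 : n ≤ 2 * (n / 2) + 1 := by omega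
      have h1' : (n : ℝ) ≤ 2 * (m : ℝ) + 1 := by exact_mod_cast h1
      have hn3' : (3 : ℝ) ≤ (n : ℝ) := by exact_mod_cast hn3
      linarith
    have key : M 1 ^ n * (m : ℝ) ^ j ≤ M n := by
      have heq : M 1 ^ n * (m : ℝ) ^ j = M 1 ^ m * ((m : ℝ) * M 1) ^ j := by
        rw [← hmj, pow_add, mul_pow]; ring
      rw [heq]
      calc M 1 ^ m * ((m : ℝ) * M 1) ^ j
          ≤ M m * ((m : ℝ) * M 1) ^ j :=
            mul_le_mul_of_nonneg_right (aux_low1 hpos hM0 hbin m) (by positivity)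
        _ ≤ M (m + j) := aux_low2 hpos hbin m j
        _ = M n := by rw [hmj]
    have hlog : Real.log (M 1 ^ n * (m : ℝ) ^ j) ≤ Real.log (M n) :=
      Real.log_le_log (by positivity) key
    rw [Real.log_mul (by positivity) (by positivity), Real.log_pow, Real.log_pow] at hlog
    have hlogm : Real.log (n : ℝ) - Real.log 3 ≤ Real.log (m : ℝ) := by
      have h1 : Real.log ((n : ℝ) / 3) ≤ Real.log (m : ℝ) :=
        Real.log_le_log (by positivity) hm3
      rwa [Real.log_div hnpos.ne' (by norm_num)] at h1
    have hln3 : Real.log 3 ≤ Real.log (n : ℝ) :=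
      Real.log_le_log (by norm_num) (by exact_mod_cast hn3)
    have hjlog : (n : ℝ) / 2 * (Real.log (n : ℝ) - Real.log 3) ≤ (j : ℝ) * Real.log (m : ℝ) := by
      refine mul_le_mul hjm hlogm (by linarith) (by positivity)
    have hmul := mul_le_mul_of_nonneg_left hKn hnpos.le
    nlinarith [hlog, hjlog, hmul]
  -- Step B : eventual upper bound on log M n
  obtain ⟨N0, hN0⟩ := eventually_atTop.1 (hgrow.eventually_ge_atTop 1)
  have hrec : ∀ k, max N0 1 ≤ k → M (k + 1) ≤ ((k : ℝ) / 1) ^ 2 * M k := by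
    intro k hk
    have h := hN0 k (le_trans (le_max_left _ _) hk)
    have hk1 := hpos (k + 1)
    rw [le_div_iff₀ hk1] at h
    simpa using h
  obtain ⟨A, hA, hup⟩ := aux_upper hpos one_pos (le_max_right N0 1) hrec
  have hlog_up : ∀ n, max N0 1 ≤ n → Real.log (M n) ≤ Real.log A + 2 * (n : ℝ) * Real.log n := by
    intro n hn
    have hn1 : 1 ≤ n := le_trans (le_max_right _ _) hn
    have hn0 : (0 : ℝ) < (n : ℝ) := by exact_mod_cast hn1
    have h := Real.log_le_log (hpos n) (hup n hn)
    rw [div_one] at h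
    rw [Real.log_mul hA.ne' (by positivity), Real.log_pow] at h
    calc Real.log (M n) ≤ Real.log A + ((2 * n : ℕ) : ℝ) * Real.log (n : ℝ) := h
      _ = Real.log A + 2 * (n : ℝ) * Real.log n := by push_cast; ring
  -- Step C : a n ≤ 4 eventually
  have hbdd : ∀ᶠ n : ℕ in atTop,
      ((n : ℝ) * Real.log n) / Real.log (M n) ≤ 4 := by
    filter_upwards [hlog_low, eventually_ge_atTop 2] with n h1 h2
    have hn1 : (1 : ℝ) < (n : ℝ) := by exact_mod_cast (by omega : 1 < n)
    have hlogn : 0 < Real.log (n : ℝ) := Real.log_pos hn1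
    have hMn : 0 < Real.log (M n) := lt_of_lt_of_le (by positivity) h1
    rw [div_le_iff₀ hMn]
    nlinarith
  have hbddU : IsBoundedUnder (· ≤ ·) atTop
      (fun n : ℕ => ((n : ℝ) * Real.log n) / Real.log (M n)) :=
    ⟨4, eventually_map.2 hbdd⟩
  -- Step D : order ≥ 1/2
  have htendnl : Tendsto (fun n : ℕ => (n : ℝ) * Real.log n) atTop atTop :=
    tendsto_natCast_atTop_atTop.atTop_mul_atTop₀
      (Real.tendsto_log_atTop.comp tendsto_natCast_atTop_atTop)
  have hfreq : ∀ c : ℝ, 0 ≤ c → c < 1 / 2 →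
      ∀ᶠ n : ℕ in atTop, c ≤ ((n : ℝ) * Real.log n) / Real.log (M n) := by
    intro c hc0 hc
    have h12 : 0 < 1 - 2 * c := by linarith
    filter_upwards [hlog_low, eventually_ge_atTop (max (max N0 1) 2),
      htendnl.eventually_ge_atTop (c * Real.log A / (1 - 2 * c))] with n h1 h2 h3
    have hnN : max N0 1 ≤ n := le_trans (le_max_left _ _) h2
    have hn2 : 2 ≤ n := le_trans (le_max_right _ _) h2
    have hlogn : 0 < Real.log (n : ℝ) := Real.log_pos (by exact_mod_cast (by omega : 1 < n))
    have hMn : 0 < Real.log (M n) := lt_of_lt_of_le (by positivity) h1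
    rw [le_div_iff₀ hMn]
    have hup' := hlog_up n hnN
    have h5 : c * Real.log (M n) ≤ c * (Real.log A + 2 * (n : ℝ) * Real.log n) :=
      mul_le_mul_of_nonneg_left hup' hc0
    rw [div_le_iff₀ h12] at h3
    nlinarith
  have hhalf : 1 / 2 ≤ entireOrder M := by
    by_contra hlt
    push_neg at hlt
    set c := max ((entireOrder M + 1 / 2) / 2) 0 with hcdef
    have hc0 : 0 ≤ c := le_max_right _ _
    have hc : c < 1 / 2 := max_lt (by linarith) (by norm_num)
    have hle : c ≤ entireOrder M :=
      le_limsup_of_frequently_le ((hfreq c hc0 hc).frequently) hbddU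
    have hlt2 : entireOrder M < c :=
      lt_of_lt_of_le (by linarith : entireOrder M < (entireOrder M + 1 / 2) / 2)
        (le_max_left _ _)
    linarith
  -- Step E : infinite type (eventual bound)
  have htype : ∀ T : ℝ, ∀ᶠ n : ℕ in atTop,
      T ≤ (n : ℝ) * (1 / M n) ^ (1 / (2 * (n : ℝ))) := by
    intro T
    set C := max (2 * T) 1 with hCdef
    have hC1 : (1 : ℝ) ≤ C := le_max_right _ _
    have hC0 : (0 : ℝ) < C := by linarith
    obtain ⟨N1, hN1⟩ := eventually_atTop.1 (hgrow.eventually_ge_atTop (C ^ 2))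
    have hrec2 : ∀ k, max N1 1 ≤ k → M (k + 1) ≤ ((k : ℝ) / C) ^ 2 * M k := by
      intro k hk
      have h := hN1 k (le_trans (le_max_left _ _) hk)
      have hk1 := hpos (k + 1)
      rw [le_div_iff₀ hk1] at h
      rw [div_pow, div_mul_eq_mul_div, le_div_iff₀ (by positivity)]
      nlinarith
    obtain ⟨A2, hA2, hup2⟩ := aux_upper hpos hC0 (le_max_right N1 1) hrec2
    -- A2 ^ (1/(2n)) → 1
    have he0 : Tendsto (fun n : ℕ => 1 / (2 * (n : ℝ))) atTop (nhds 0) := by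
      have h2n : Tendsto (fun n : ℕ => 2 * (n : ℝ)) atTop atTop :=
        tendsto_natCast_atTop_atTop.const_mul_atTop two_pos
      have h3 := h2n.inv_tendsto_atTop
      exact Tendsto.congr (fun n => by simp [one_div]) h3
    have hAt : Tendsto (fun n : ℕ => A2 ^ (1 / (2 * (n : ℝ)))) atTop (nhds 1) := by
      have heq : (fun n : ℕ => A2 ^ (1 / (2 * (n : ℝ))))
          = fun n : ℕ => Real.exp (Real.log A2 * (1 / (2 * (n : ℝ)))) := by
        funext n; rw [Real.rpow_def_of_pos hA2]
      rw [heq]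
      have hmul : Tendsto (fun n : ℕ => Real.log A2 * (1 / (2 * (n : ℝ)))) atTop (nhds 0) := by
        simpa using he0.const_mul (Real.log A2)
      simpa [Function.comp_def] using (Real.continuous_exp.tendsto 0).comp hmul
    have hA2ev : ∀ᶠ n : ℕ in atTop, A2 ^ (1 / (2 * (n : ℝ))) ≤ 2 :=
      hAt.eventually (eventually_le_nhds (by norm_num))
    filter_upwards [hA2ev, eventually_ge_atTop (max N1 1), eventually_ge_atTop 1]
      with n h2 hnN hn1
    have hn0 : (0 : ℝ) < (n : ℝ) := by exact_mod_cast hn1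
    have hMb := hup2 n hnN
    have hApos : (0 : ℝ) < A2 ^ (1 / (2 * (n : ℝ))) := Real.rpow_pos_of_pos hA2 _
    -- key : C / A2^(1/(2n)) ≤ n * (1/M n)^(1/(2n))
    have hxpos : (0 : ℝ) < A2 * ((n : ℝ) / C) ^ (2 * n) := by positivity
    have h5 : (1 / (A2 * ((n : ℝ) / C) ^ (2 * n))) ^ (1 / (2 * (n : ℝ)))
        ≤ (1 / M n) ^ (1 / (2 * (n : ℝ))) := by
      refine Real.rpow_le_rpow (by positivity) ?_ (by positivity)
      exact one_div_le_one_div_of_le (hpos n) hMb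
    have h6 : (1 / (A2 * ((n : ℝ) / C) ^ (2 * n))) ^ (1 / (2 * (n : ℝ)))
        = (A2 ^ (1 / (2 * (n : ℝ))))⁻¹ * (C / (n : ℝ)) := by
      have hinv : (1 : ℝ) / (A2 * ((n : ℝ) / C) ^ (2 * n))
          = A2⁻¹ * (C / (n : ℝ)) ^ (2 * n) := by
        rw [one_div, mul_inv, ← inv_pow, inv_div]
      rw [hinv, Real.mul_rpow (by positivity) (by positivity)]
      congr 1
      · exact Real.inv_rpow hA2.le _
      · rw [← Real.rpow_natCast (C / (n : ℝ)) (2 * n), ← Real.rpow_mul (by positivity)]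
        have : ((2 * n : ℕ) : ℝ) * (1 / (2 * (n : ℝ))) = 1 := by
          push_cast
          field_simp
        rw [this, Real.rpow_one]
    have hkey : C / A2 ^ (1 / (2 * (n : ℝ))) ≤ (n : ℝ) * (1 / M n) ^ (1 / (2 * (n : ℝ))) := by
      have h7 : (n : ℝ) * ((A2 ^ (1 / (2 * (n : ℝ))))⁻¹ * (C / (n : ℝ)))
          = C / A2 ^ (1 / (2 * (n : ℝ))) := by
        field_simp
      calc C / A2 ^ (1 / (2 * (n : ℝ)))
          = (n : ℝ) * ((1 / (A2 * ((n : ℝ) / C) ^ (2 * n))) ^ (1 / (2 * (n : ℝ)))) := by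
            rw [h6, h7]
        _ ≤ (n : ℝ) * (1 / M n) ^ (1 / (2 * (n : ℝ))) :=
            mul_le_mul_of_nonneg_left h5 hn0.le
    by_cases hT : T ≤ 0
    · have : (0 : ℝ) ≤ (n : ℝ) * (1 / M n) ^ (1 / (2 * (n : ℝ))) := by
        have := hpos n
        positivity
      linarith
    · push_neg at hT
      have hC2T : 2 * T ≤ C := le_max_left _ _
      have h7 : A2 ^ (1 / (2 * (n : ℝ))) ≤ C / T := by
        refine le_trans h2 ?_
        rw [le_div_iff₀ hT]
        linarith
      have h8 : T ≤ C / A2 ^ (1 / (2 * (n : ℝ))) := by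
        rw [le_div_iff₀ hApos]
        calc T * A2 ^ (1 / (2 * (n : ℝ))) ≤ T * (C / T) :=
            mul_le_mul_of_nonneg_left h7 hT.le
          _ = C := by field_simp
      linarith
  rcases eq_or_lt_of_le hhalf with heq | hlt
  · right
    exact ⟨heq.symm, fun T => (htype T).frequently⟩
  · left
    exact hlt
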